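/- The set-cover gadget graph G(U,𝒮) contains no induced cycle on five or more vertices. -/

import Mathlib

/-- Vertices of the set-cover gadget graph: a vertex `s j` for every set `S_j`,
vertices `a i`, `b i`, `c i` for every universe element `u_i`, and a special vertex `g`. -/
inductive SCVert (n m : ℕ) where
  | s : Fin m → SCVert n m
  | a : Fin n → SCVert n m
  | b : Fin n → SCVert n m
  | c : Fin n → SCVert n m
  | g : SCVert n m
deriving DecidableEq

/-- The base relation for the edges of the set-cover gadget graph for the family
`S : Fin m → Set (Fin n)`. -/
def scRel (n m : ℕ) (S : Fin m → Set (Fin n)) : SCVert n m → SCVert n m → Prop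
  | .s _, .s _ => True
  | .g, .s _ => True
  | .g, .a _ => True
  | .g, .b _ => True
  | .a i, .c i' => i = i'
  | .b i, .c i' => i = i'
  | .c i, .s j => i ∈ S j
  | _, _ => False

/-- The set-cover gadget graph `G(U, 𝒮)`. -/
def scGadget (n m : ℕ) (S : Fin m → Set (Fin n)) : SimpleGraph (SCVert n m) :=
  SimpleGraph.fromRel (scRel n m S)

/-- `C` is (the vertex set of) an induced cycle on `ℓ` vertices of `G`. -/
def IsInducedCycle {α : Type*} (G : SimpleGraph α) (ℓ : ℕ) (C : Set α) : Prop :=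
  C.ncard = ℓ ∧ Nonempty (G.induce C ≃g SimpleGraph.cycleGraph ℓ)

section Aux

variable {n m : ℕ} {S : Fin m → Set (Fin n)}

lemma sc_adj_g_s (j : Fin m) : (scGadget n m S).Adj .g (.s j) := by
  simp [scGadget, SimpleGraph.fromRel_adj, scRel]

lemma sc_adj_g_a (i : Fin n) : (scGadget n m S).Adj .g (.a i) := by
  simp [scGadget, SimpleGraph.fromRel_adj, scRel]

lemma sc_adj_g_b (i : Fin n) : (scGadget n m S).Adj .g (.b i) := by
  simp [scGadget, SimpleGraph.fromRel_adj, scRel]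

lemma sc_adj_s_s {j j' : Fin m} (h : j ≠ j') : (scGadget n m S).Adj (.s j) (.s j') := by
  simp [scGadget, SimpleGraph.fromRel_adj, scRel, h]

lemma sc_not_adj_c_c (t t' : Fin n) : ¬ (scGadget n m S).Adj (.c t) (.c t') := by
  simp [scGadget, SimpleGraph.fromRel_adj, scRel]

lemma sc_nbr_g {v : SCVert n m} (h1 : v ≠ .g) (h2 : ¬ (scGadget n m S).Adj .g v) :
    ∃ t, v = .c t := by
  cases v with
  | s j => exact absurd (sc_adj_g_s j) h2
  | a i => exact absurd (sc_adj_g_a i) h2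
  | b i => exact absurd (sc_adj_g_b i) h2
  | c t => exact ⟨t, rfl⟩
  | g => exact absurd rfl h1

lemma sc_nbr_a {t : Fin n} {v : SCVert n m} (h : (scGadget n m S).Adj (.a t) v) :
    v = .g ∨ v = .c t := by
  cases v with
  | s j => simp [scGadget, SimpleGraph.fromRel_adj, scRel] at h
  | a i => simp [scGadget, SimpleGraph.fromRel_adj, scRel] at h
  | b i => simp [scGadget, SimpleGraph.fromRel_adj, scRel] at h
  | c t' =>
    right
    simp only [scGadget, SimpleGraph.fromRel_adj, scRel] at h
    rcases h.2 with h' | h'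
    · simp [h']
    · exact absurd h' (by simp [scRel])
  | g => exact Or.inl rfl

lemma sc_nbr_b {t : Fin n} {v : SCVert n m} (h : (scGadget n m S).Adj (.b t) v) :
    v = .g ∨ v = .c t := by
  cases v with
  | s j => simp [scGadget, SimpleGraph.fromRel_adj, scRel] at h
  | a i => simp [scGadget, SimpleGraph.fromRel_adj, scRel] at h
  | b i => simp [scGadget, SimpleGraph.fromRel_adj, scRel] at h
  | c t' =>
    right
    simp only [scGadget, SimpleGraph.fromRel_adj, scRel] at h
    rcases h.2 with h' | h'
    · exact by simp [h']
    · exact absurd h' (by simp [scRel])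
  | g => exact Or.inl rfl

end Aux

/-- The set-cover gadget graph contains no induced cycle on five or more vertices. -/
theorem stmt_11 (n m : ℕ) (S : Fin m → Set (Fin n)) (ℓ : ℕ) (hℓ : 5 ≤ ℓ)
    (C : Set (SCVert n m)) : ¬ IsInducedCycle (scGadget n m S) ℓ C := by
  rintro ⟨hcard, ⟨e⟩⟩
  haveI : NeZero ℓ := ⟨by omega⟩
  letI : CommRing (Fin ℓ) := Fin.instCommRing ℓ
  -- basic `Fin ℓ` facts
  have keyval : ∀ k : ℕ, k < ℓ → ((k : Fin ℓ)).val = k := by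
    intro k hk
    rw [Fin.val_natCast]
    exact Nat.mod_eq_of_lt hk
  have keyne : ∀ k : ℕ, 0 < k → k < ℓ → (k : Fin ℓ) ≠ 0 := by
    intro k h1 h2 h
    have := congrArg Fin.val h
    rw [keyval k h2] at this
    simp at this
    omega
  have f1 : ∀ i : Fin ℓ, (SimpleGraph.cycleGraph ℓ).Adj i (i + 1) := by
    intro i
    rw [SimpleGraph.cycleGraph_adj']
    right
    have h1 : i + 1 - i = ((1 : ℕ) : Fin ℓ) := by push_cast; ring
    rw [h1, keyval 1 (by omega)]
  have f2 : ∀ i : Fin ℓ, ¬ (SimpleGraph.cycleGraph ℓ).Adj i (i + 1 + 1) := by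
    intro i h
    rw [SimpleGraph.cycleGraph_adj'] at h
    rcases h with h | h
    · have h1 : i - (i + 1 + 1) = ((ℓ - 2 : ℕ) : Fin ℓ) := by
        rw [Nat.cast_sub (by omega), Fin.natCast_self]
        push_cast
        ring
      rw [h1, keyval _ (by omega)] at h
      omega
    · have h1 : i + 1 + 1 - i = ((2 : ℕ) : Fin ℓ) := by push_cast; ring
      rw [h1, keyval 2 (by omega)] at h
      omega
  have f3 : ∀ i : Fin ℓ, ¬ (SimpleGraph.cycleGraph ℓ).Adj i (i + 1 + 1 + 1) := by
    intro i h
    rw [SimpleGraph.cycleGraph_adj'] at h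
    rcases h with h | h
    · have h1 : i - (i + 1 + 1 + 1) = ((ℓ - 3 : ℕ) : Fin ℓ) := by
        rw [Nat.cast_sub (by omega), Fin.natCast_self]
        push_cast
        ring
      rw [h1, keyval _ (by omega)] at h
      omega
    · have h1 : i + 1 + 1 + 1 - i = ((3 : ℕ) : Fin ℓ) := by push_cast; ring
      rw [h1, keyval 3 (by omega)] at h
      omega
  have f4 : ∀ i : Fin ℓ, i + 1 ≠ i := by
    intro i h
    exact keyne 1 (by omega) (by omega) (by push_cast; linear_combination h)
  have f5 : ∀ i : Fin ℓ, i + 1 + 1 ≠ i := by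
    intro i h
    exact keyne 2 (by omega) (by omega) (by push_cast; linear_combination h)
  have f6 : ∀ i : Fin ℓ, i + 1 + 1 + 1 ≠ i := by
    intro i h
    exact keyne 3 (by omega) (by omega) (by push_cast; linear_combination h)
  have f7 : ∀ i : Fin ℓ, i - 1 ≠ i + 1 := by
    intro i h
    exact keyne 2 (by omega) (by omega) (by push_cast; linear_combination -h)
  have f8 : ∀ i : Fin ℓ, (i - 1) + 1 = i := by intro i; ring
  -- the map from positions to vertices
  set φ : Fin ℓ → SCVert n m := fun i => ((e.symm i : C) : SCVert n m) with hφ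
  have hmem : ∀ i, φ i ∈ C := fun i => (e.symm i).2
  have hinj : ∀ {i j : Fin ℓ}, φ i = φ j → i = j := by
    intro i j h
    exact e.symm.toEquiv.injective (Subtype.ext h)
  have hadj : ∀ i j : Fin ℓ,
      (scGadget n m S).Adj (φ i) (φ j) ↔ (SimpleGraph.cycleGraph ℓ).Adj i j := by
    intro i j
    rw [← SimpleGraph.Iso.map_adj_iff e.symm]
    rfl
  by_cases hg : SCVert.g ∈ C
  · -- case g ∈ C
    set w : Fin ℓ := e ⟨SCVert.g, hg⟩ with hw
    have hφw : φ w = SCVert.g := by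
      rw [hφ]
      simp only [hw, RelIso.symm_apply_apply]
    have hc : ∀ i : Fin ℓ, i ≠ w → ¬ (SimpleGraph.cycleGraph ℓ).Adj w i →
        ∃ t, φ i = SCVert.c t := by
      intro i h1 h2
      apply sc_nbr_g (S := S)
      · intro h
        exact h1 (hinj (h.trans hφw.symm))
      · rw [← hφw]
        rw [hadj]
        exact h2
    obtain ⟨t1, ht1⟩ := hc (w + 1 + 1) (f5 w) (f2 w)
    obtain ⟨t2, ht2⟩ := hc (w + 1 + 1 + 1) (f6 w) (f3 w)
    have : (scGadget n m S).Adj (φ (w + 1 + 1)) (φ (w + 1 + 1 + 1)) :=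
      (hadj _ _).2 (f1 _)
    rw [ht1, ht2] at this
    exact sc_not_adj_c_c t1 t2 this
  · -- case g ∉ C
    have hnotg : ∀ i : Fin ℓ, φ i ≠ SCVert.g := by
      intro i h
      exact hg (h ▸ hmem i)
    -- no a or b vertices
    have hna : ∀ (i : Fin ℓ) (t : Fin n), φ i ≠ SCVert.a t := by
      intro i t h
      have h1 : (scGadget n m S).Adj (φ i) (φ (i + 1)) := (hadj _ _).2 (f1 i)
      have h2 : (scGadget n m S).Adj (φ i) (φ (i - 1)) := by
        rw [hadj]
        have := f1 (i - 1)
        rw [f8 i] at this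
        exact this.symm
      rw [h] at h1 h2
      rcases sc_nbr_a h1 with h1' | h1'
      · exact hnotg _ h1'
      rcases sc_nbr_a h2 with h2' | h2'
      · exact hnotg _ h2'
      exact f7 i (hinj (h2'.trans h1'.symm))
    have hnb : ∀ (i : Fin ℓ) (t : Fin n), φ i ≠ SCVert.b t := by
      intro i t h
      have h1 : (scGadget n m S).Adj (φ i) (φ (i + 1)) := (hadj _ _).2 (f1 i)
      have h2 : (scGadget n m S).Adj (φ i) (φ (i - 1)) := by
        rw [hadj]
        have := f1 (i - 1)
        rw [f8 i] at this
        exact this.symm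
      rw [h] at h1 h2
      rcases sc_nbr_b h1 with h1' | h1'
      · exact hnotg _ h1'
      rcases sc_nbr_b h2 with h2' | h2'
      · exact hnotg _ h2'
      exact f7 i (hinj (h2'.trans h1'.symm))
    -- every vertex is of type s or c
    have hsc : ∀ i : Fin ℓ, (∃ j, φ i = SCVert.s j) ∨ (∃ t, φ i = SCVert.c t) := by
      intro i
      cases hv : φ i with
      | s j => exact Or.inl ⟨j, rfl⟩
      | a t => exact absurd hv (hna i t)
      | b t => exact absurd hv (hnb i t)
      | c t => exact Or.inr ⟨t, rfl⟩
      | g => exact absurd hv (hnotg i)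
    -- two distinct s-type vertices at nonadjacent positions give a contradiction
    have hss : ∀ i i' : Fin ℓ, i ≠ i' → ¬ (SimpleGraph.cycleGraph ℓ).Adj i i' →
        (∃ j, φ i = SCVert.s j) → (∃ j, φ i' = SCVert.s j) → False := by
      rintro i i' hne hnadj ⟨j, hj⟩ ⟨j', hj'⟩
      have hjj' : j ≠ j' := by
        intro h
        exact hne (hinj (by rw [hj, hj', h]))
      have : (scGadget n m S).Adj (φ i) (φ i') := by
        rw [hj, hj']
        exact sc_adj_s_s hjj'
      exact hnadj ((hadj _ _).1 this)
    by_cases hcc : ∃ (i : Fin ℓ) (t : Fin n), φ i = SCVert.c t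
    · obtain ⟨i, t, hit⟩ := hcc
      -- the two neighbors of position i must be s-type
      have hn1 : ∃ j, φ (i + 1) = SCVert.s j := by
        rcases hsc (i + 1) with h | ⟨t', ht'⟩
        · exact h
        · exfalso
          have h1 : (scGadget n m S).Adj (φ i) (φ (i + 1)) := (hadj _ _).2 (f1 i)
          rw [hit, ht'] at h1
          exact sc_not_adj_c_c t t' h1
      have hn2 : ∃ j, φ (i - 1) = SCVert.s j := by
        rcases hsc (i - 1) with h | ⟨t', ht'⟩
        · exact h
        · exfalso
          have h1 : (scGadget n m S).Adj (φ (i - 1)) (φ i) := by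
            rw [hadj]
            have := f1 (i - 1)
            rw [f8 i] at this
            exact this
          rw [hit, ht'] at h1
          exact sc_not_adj_c_c t' t h1
      have hne : i - 1 ≠ i + 1 := f7 i
      have hnadj : ¬ (SimpleGraph.cycleGraph ℓ).Adj (i - 1) (i + 1) := by
        have := f2 (i - 1)
        rwa [show i - 1 + 1 + 1 = i + 1 by rw [f8 i]] at this
      exact hss _ _ hne hnadj hn2 hn1
    · push_neg at hcc
      have h0 : ∃ j, φ 0 = SCVert.s j := by
        rcases hsc 0 with h | ⟨t, ht⟩
        · exact h
        · exact absurd ht (hcc 0 t)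
      have h2 : ∃ j, φ (0 + 1 + 1) = SCVert.s j := by
        rcases hsc (0 + 1 + 1) with h | ⟨t, ht⟩
        · exact h
        · exact absurd ht (hcc _ t)
      exact hss 0 (0 + 1 + 1) (Ne.symm (f5 0)) (f2 0) h0 h2
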